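/- Suppose ρ_h, ω_h, u_h, γ_h : [0,T] → V_h^k (with u_h, ρ_h, ω_h differentiable in s) satisfy, for every cell I_j and all test functions φ, ϕ, ψ, η ∈ V_h^k: ((ρ_h)_s, φ)_{I_j} + ⟨{γ_h}, φ⟩_{I_j} − (γ_h, φ_y)_{I_j} = 0; ((ω_h)_s, ϕ)_{I_j} = (ρ_h u_h, ϕ)_{I_j}; (ω_h, ψ)_{I_j} = ⟨{u_h}, ψ⟩_{I_j} − (u_h, ψ_y)_{I_j}; and (γ_h, η)_{I_j} = (½ u_h², η)_{I_j}, with periodic boundary conditions. Then the discrete quantity H_0(ρ_h, u_h) = ∫_{y_L}^{y_R} ρ_h u_h² dy is conserved: d/ds ∫_{y_L}^{y_R} ρ_h u_h² dy = 0 for all s. -/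

import Mathlib

open MeasureTheory Polynomial
open scoped Classical

noncomputable section

namespace CDaux

/-- Interpolation nodes `0, 1, …, D`. -/
def nds (D : ℕ) : Fin (D + 1) → ℝ := fun i => (i : ℝ)

lemma nds_injOn (D : ℕ) : Set.InjOn (nds D) (Finset.univ : Finset (Fin (D + 1))) := by
  intro a _ b _ h
  simp only [nds] at h
  have : (a : ℕ) = (b : ℕ) := by exact_mod_cast h
  exact Fin.ext this

lemma degree_lt_card {D : ℕ} {p : ℝ[X]} (hp : p.natDegree ≤ D) :
    p.degree < ((Finset.univ : Finset (Fin (D + 1))).card : ℕ) := by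
  simp only [Finset.card_univ, Fintype.card_fin]
  exact lt_of_le_of_lt p.degree_le_natDegree (by exact_mod_cast Nat.lt_succ_of_le hp)

/-- Lagrange interpolation identity, evaluated form. -/
lemma eval_eq_sum {D : ℕ} {p : ℝ[X]} (hp : p.natDegree ≤ D) (y : ℝ) :
    p.eval y = ∑ i : Fin (D + 1),
      p.eval (nds D i) * (Lagrange.basis Finset.univ (nds D) i).eval y := by
  conv_lhs => rw [Lagrange.eq_interpolate (nds_injOn D) (degree_lt_card hp)]
  simp [Lagrange.interpolate_apply, eval_finset_sum]

/-- The integral of a polynomial of degree `≤ D` is a fixed linear combination of its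
values at the nodes. -/
lemma integral_eval_eq_sum (a b : ℝ) {D : ℕ} {p : ℝ[X]} (hp : p.natDegree ≤ D) :
    ∫ y in a..b, p.eval y = ∑ i : Fin (D + 1),
      p.eval (nds D i) * ∫ y in a..b, (Lagrange.basis Finset.univ (nds D) i).eval y := by
  have h1 : (fun y => p.eval y) = fun y => ∑ i : Fin (D + 1),
      p.eval (nds D i) * (Lagrange.basis Finset.univ (nds D) i).eval y :=
    funext fun y => eval_eq_sum hp y
  rw [h1, intervalIntegral.integral_finset_sum]
  · exact Finset.sum_congr rfl fun i _ => intervalIntegral.integral_const_mul _ _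
  · intro i _
    exact (continuous_const.mul (Lagrange.basis Finset.univ (nds D) i).continuous).intervalIntegrable _ _

/-- Differentiation under the integral sign for a family of polynomials of bounded degree. -/
lemma hasDerivAt_integral {a b s : ℝ} {D : ℕ} {F : ℝ → ℝ[X]} {G : ℝ[X]}
    (hF : ∀ τ, (F τ).natDegree ≤ D) (hG : G.natDegree ≤ D)
    (hd : ∀ y, HasDerivAt (fun τ => (F τ).eval y) (G.eval y) s) :
    HasDerivAt (fun τ => ∫ y in a..b, (F τ).eval y) (∫ y in a..b, G.eval y) s := by
  have h1 : (fun τ => ∫ y in a..b, (F τ).eval y) = fun τ => ∑ i : Fin (D + 1),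
      (F τ).eval (nds D i) * ∫ y in a..b, (Lagrange.basis Finset.univ (nds D) i).eval y :=
    funext fun τ => integral_eval_eq_sum a b (hF τ)
  rw [h1, integral_eval_eq_sum a b hG]
  exact HasDerivAt.fun_sum fun i _ => (hd (nds D i)).mul_const _

/-- The pointwise `s`-derivative of a family of polynomials of degree `≤ D`
has degree `≤ D`. -/
lemma natDegree_deriv_le {s : ℝ} {D : ℕ} {F : ℝ → ℝ[X]} {G : ℝ[X]}
    (hF : ∀ τ, (F τ).natDegree ≤ D)
    (hd : ∀ y, HasDerivAt (fun τ => (F τ).eval y) (G.eval y) s) : G.natDegree ≤ D := by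
  set v := nds D
  set r : ℝ[X] := Lagrange.interpolate Finset.univ v (fun i => G.eval (v i)) with hr
  have key : ∀ (y τ : ℝ), slope (fun τ => (F τ).eval y) s τ
      = ∑ i : Fin (D + 1), slope (fun τ => (F τ).eval (v i)) s τ
          * (Lagrange.basis Finset.univ v i).eval y := by
    intro y τ
    simp only [slope_def_field]
    rw [eval_eq_sum (hF τ) y, eval_eq_sum (hF s) y, ← Finset.sum_sub_distrib,
      Finset.sum_div]
    exact Finset.sum_congr rfl fun i _ => by ring
  have hGr : G = r := by
    apply Polynomial.funext
    intro y
    have t1 : Filter.Tendsto (slope (fun τ => (F τ).eval y) s) (nhdsWithin s {s}ᶜ)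
        (nhds (G.eval y)) := hasDerivAt_iff_tendsto_slope.mp (hd y)
    have t2 : Filter.Tendsto (slope (fun τ => (F τ).eval y) s) (nhdsWithin s {s}ᶜ)
        (nhds (r.eval y)) := by
      have h2 : r.eval y = ∑ i : Fin (D + 1),
          G.eval (v i) * (Lagrange.basis Finset.univ v i).eval y := by
        simp [hr, Lagrange.interpolate_apply, eval_finset_sum]
      rw [h2, funext (key y)]
      exact tendsto_finset_sum _ fun i _ =>
        (hasDerivAt_iff_tendsto_slope.mp (hd (v i))).mul_const _
    exact tendsto_nhds_unique t1 t2
  rw [hGr]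
  by_cases h0 : r = 0
  · simp [h0]
  · have hd2 := Lagrange.degree_interpolate_lt (fun i => G.eval (v i)) (nds_injOn D)
    have hlt : r.natDegree < D + 1 := by
      rw [Polynomial.natDegree_lt_iff_degree_lt h0]
      simpa [hr] using hd2
    omega

/-- Fundamental theorem of calculus for `∫ p p'`. -/
lemma integral_self_mul_deriv (a b : ℝ) (p : ℝ[X]) :
    ∫ y in a..b, p.eval y * p.derivative.eval y
      = p.eval b * p.eval b / 2 - p.eval a * p.eval a / 2 := by
  apply intervalIntegral.integral_eq_sub_of_hasDerivAt
    (f := fun y => p.eval y * p.eval y / 2)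
  · intro y _
    have h := ((p.hasDerivAt y).mul (p.hasDerivAt y)).div_const 2
    refine h.congr_deriv ?_
    ring
  · exact (p.continuous.mul p.derivative.continuous).intervalIntegrable _ _

end CDaux

/- Mesh with `N + 1` cells: cell `j` is `I_j = [grid j.castSucc, grid j.succ]`.
A DG function in `V_h^k` is represented by the family of its polynomial restrictions
to the cells; interfaces are treated periodically (indices modulo the number of cells). -/

/-- Left endpoint of cell `j`. -/
def lep {N : ℕ} (grid : Fin (N + 2) → ℝ) (j : Fin (N + 1)) : ℝ := grid j.castSucc

/-- Right endpoint of cell `j`. -/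
def rep {N : ℕ} (grid : Fin (N + 2) → ℝ) (j : Fin (N + 1)) : ℝ := grid j.succ

/-- `∫_{I_j} f dy`. -/
def cellInt {N : ℕ} (grid : Fin (N + 2) → ℝ) (j : Fin (N + 1)) (f : ℝ → ℝ) : ℝ :=
  ∫ y in lep grid j..rep grid j, f y

/-- Trace `w⁻` at the interface `y_{j+1/2}`, from the left cell `I_j`. -/
def trM {N : ℕ} (grid : Fin (N + 2) → ℝ) (f : Fin (N + 1) → Polynomial ℝ)
    (j : Fin (N + 1)) : ℝ :=
  (f j).eval (rep grid j)

/-- Trace `w⁺` at the interface `y_{j+1/2}`, from the right cell `I_{j+1}`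
(cyclically, realizing the periodic boundary conditions). -/
def trP {N : ℕ} (grid : Fin (N + 2) → ℝ) (f : Fin (N + 1) → Polynomial ℝ)
    (j : Fin (N + 1)) : ℝ :=
  (f (j + 1)).eval (lep grid (j + 1))

/-- Average `{w} = (w⁺ + w⁻)/2` at the interface `y_{j+1/2}`. -/
def avg {N : ℕ} (grid : Fin (N + 2) → ℝ) (f : Fin (N + 1) → Polynomial ℝ)
    (j : Fin (N + 1)) : ℝ :=
  (trP grid f j + trM grid f j) / 2

/-- Boundary bracket `⟨ĥ, φ⟩_{I_j} = ĥ_{j+1/2} φ⁻_{j+1/2} - ĥ_{j-1/2} φ⁺_{j-1/2}`, where the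
interface values `ĥ` are indexed by the right interface of each cell (periodically). -/
def brk {N : ℕ} (grid : Fin (N + 2) → ℝ) (hat : Fin (N + 1) → ℝ) (φ : Polynomial ℝ)
    (j : Fin (N + 1)) : ℝ :=
  hat j * φ.eval (rep grid j) - hat (j - 1) * φ.eval (lep grid j)

namespace CDaux

/-- The telescoping identity for the central flux. -/
lemma tele {N : ℕ} (grid : Fin (N + 2) → ℝ) (f : Fin (N + 1) → Polynomial ℝ) :
    ∑ j, (brk grid (avg grid f) (f j) j
      - cellInt grid j (fun y => (f j).eval y * (f j).derivative.eval y)) = 0 := by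
  have hlep : ∀ j : Fin (N + 1), (f j).eval (lep grid j) = trP grid f (j - 1) := by
    intro j
    simp [trP, sub_add_cancel]
  have hint : ∀ j : Fin (N + 1),
      cellInt grid j (fun y => (f j).eval y * (f j).derivative.eval y)
        = trM grid f j * trM grid f j / 2 - trP grid f (j - 1) * trP grid f (j - 1) / 2 := by
    intro j
    rw [cellInt, CDaux.integral_self_mul_deriv, ← hlep j]
    rfl
  have hbrk : ∀ j : Fin (N + 1), brk grid (avg grid f) (f j) j
      = avg grid f j * trM grid f j - avg grid f (j - 1) * trP grid f (j - 1) := by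
    intro j
    rw [brk, hlep j]
    rfl
  have hsum : ∑ j, (brk grid (avg grid f) (f j) j
      - cellInt grid j (fun y => (f j).eval y * (f j).derivative.eval y))
    = ∑ j : Fin (N + 1),
        ((avg grid f j * trM grid f j - trM grid f j * trM grid f j / 2)
        - (avg grid f (j - 1) * trP grid f (j - 1)
            - trP grid f (j - 1) * trP grid f (j - 1) / 2)) := by
    refine Finset.sum_congr rfl fun j _ => ?_
    rw [hint j, hbrk j]; ring
  rw [hsum, Finset.sum_sub_distrib]
  have hre : ∑ j : Fin (N + 1), (avg grid f (j - 1) * trP grid f (j - 1)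
        - trP grid f (j - 1) * trP grid f (j - 1) / 2)
      = ∑ j : Fin (N + 1), (avg grid f j * trP grid f j
        - trP grid f j * trP grid f j / 2) :=
    Fintype.sum_equiv (Equiv.subRight 1) _ _ (fun j => rfl)
  rw [hre, ← Finset.sum_sub_distrib]
  refine Finset.sum_eq_zero fun j _ => ?_
  have ha : avg grid f j = (trP grid f j + trM grid f j) / 2 := rfl
  rw [ha]; ring

end CDaux

/-- **`H₀`-conservation of the semi-discrete DG scheme for the coupled dispersionless system
`ρ_s + (u²/2)_y = 0`, `u_{ys} = ρu`** (written as `ρ_s + γ_y = 0`, `ω_s = ρu`, `ω = u_y`,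
`γ = u²/2`), with the central fluxes `γ̂ = {γ}`, `û = {u}` and periodic boundary conditions.
The discrete quantity `H₀(ρ_h, u_h) = ∫_I ρ_h u_h² dy` satisfies `d/ds H₀ = 0` for all `s`. -/
theorem CD_DG_H0_conserved
    (N k : ℕ) (grid : Fin (N + 2) → ℝ) (hgrid : StrictMono grid)
    (ρ w u γ ρ' w' u' : ℝ → Fin (N + 1) → Polynomial ℝ)
    (hdeg : ∀ s j, (ρ s j).natDegree ≤ k ∧ (w s j).natDegree ≤ k ∧
      (u s j).natDegree ≤ k ∧ (γ s j).natDegree ≤ k)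
    (hρ' : ∀ (s : ℝ) (j : Fin (N + 1)) (y : ℝ),
      HasDerivAt (fun τ => (ρ τ j).eval y) ((ρ' s j).eval y) s)
    (hw' : ∀ (s : ℝ) (j : Fin (N + 1)) (y : ℝ),
      HasDerivAt (fun τ => (w τ j).eval y) ((w' s j).eval y) s)
    (hu' : ∀ (s : ℝ) (j : Fin (N + 1)) (y : ℝ),
      HasDerivAt (fun τ => (u τ j).eval y) ((u' s j).eval y) s)
    (scheme1 : ∀ (s : ℝ) (j : Fin (N + 1)) (φ : Polynomial ℝ), φ.natDegree ≤ k →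
      cellInt grid j (fun y => (ρ' s j).eval y * φ.eval y)
        + brk grid (avg grid (γ s)) φ j
        - cellInt grid j (fun y => (γ s j).eval y * φ.derivative.eval y) = 0)
    (scheme2 : ∀ (s : ℝ) (j : Fin (N + 1)) (φ : Polynomial ℝ), φ.natDegree ≤ k →
      cellInt grid j (fun y => (w' s j).eval y * φ.eval y)
        = cellInt grid j (fun y => (ρ s j).eval y * (u s j).eval y * φ.eval y))
    (scheme3 : ∀ (s : ℝ) (j : Fin (N + 1)) (ψ : Polynomial ℝ), ψ.natDegree ≤ k →
      cellInt grid j (fun y => (w s j).eval y * ψ.eval y)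
        = brk grid (avg grid (u s)) ψ j
          - cellInt grid j (fun y => (u s j).eval y * ψ.derivative.eval y))
    (scheme4 : ∀ (s : ℝ) (j : Fin (N + 1)) (η : Polynomial ℝ), η.natDegree ≤ k →
      cellInt grid j (fun y => (γ s j).eval y * η.eval y)
        = cellInt grid j (fun y => ((u s j).eval y) ^ 2 / 2 * η.eval y))
    (s : ℝ) :
    HasDerivAt
      (fun τ => ∑ j, cellInt grid j (fun y => (ρ τ j).eval y * ((u τ j).eval y) ^ 2)) 0 s := by
  classical
  have hdu' : ∀ j, (u' s j).natDegree ≤ k := fun j =>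
    CDaux.natDegree_deriv_le (fun τ => (hdeg τ j).2.2.1) (hu' s j)
  have hdρ' : ∀ j, (ρ' s j).natDegree ≤ k := fun j =>
    CDaux.natDegree_deriv_le (fun τ => (hdeg τ j).1) (hρ' s j)
  have hdw' : ∀ j, (w' s j).natDegree ≤ k := fun j =>
    CDaux.natDegree_deriv_le (fun τ => (hdeg τ j).2.1) (hw' s j)
  -- differentiated version of scheme3, with test function `ψ = u' s j`
  have scheme3' : ∀ j, cellInt grid j (fun y => (w' s j).eval y * (u' s j).eval y)
      = brk grid (avg grid (u' s)) (u' s j) j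
        - cellInt grid j (fun y => (u' s j).eval y * (u' s j).derivative.eval y) := by
    intro j
    set ψ : Polynomial ℝ := u' s j with hψ
    have hL : HasDerivAt (fun τ => cellInt grid j (fun y => (w τ j).eval y * ψ.eval y))
        (cellInt grid j (fun y => (w' s j).eval y * ψ.eval y)) s := by
      have h := CDaux.hasDerivAt_integral (a := lep grid j) (b := rep grid j)
        (D := k + ψ.natDegree) (F := fun τ => w τ j * ψ) (G := w' s j * ψ)
        (fun τ => natDegree_mul_le.trans (add_le_add (hdeg τ j).2.1 le_rfl))
        (natDegree_mul_le.trans (add_le_add (hdw' j) le_rfl))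
        (fun y => by simpa [eval_mul] using (hw' s j y).mul_const (ψ.eval y))
      simpa [cellInt, eval_mul] using h
    have hA : ∀ i : Fin (N + 1),
        HasDerivAt (fun τ => avg grid (u τ) i) (avg grid (u' s) i) s := by
      intro i
      simpa [avg, trP, trM] using
        (((hu' s (i + 1) (lep grid (i + 1))).add (hu' s i (rep grid i))).div_const 2)
    have h1 : HasDerivAt (fun τ => brk grid (avg grid (u τ)) ψ j)
        (brk grid (avg grid (u' s)) ψ j) s := by
      simpa [brk] using ((hA j).mul_const (ψ.eval (rep grid j))).fun_sub
        ((hA (j - 1)).mul_const (ψ.eval (lep grid j)))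
    have h2 : HasDerivAt
        (fun τ => cellInt grid j (fun y => (u τ j).eval y * ψ.derivative.eval y))
        (cellInt grid j (fun y => (u' s j).eval y * ψ.derivative.eval y)) s := by
      have h := CDaux.hasDerivAt_integral (a := lep grid j) (b := rep grid j)
        (D := k + ψ.derivative.natDegree) (F := fun τ => u τ j * ψ.derivative)
        (G := u' s j * ψ.derivative)
        (fun τ => natDegree_mul_le.trans (add_le_add (hdeg τ j).2.2.1 le_rfl))
        (natDegree_mul_le.trans (add_le_add (hdu' j) le_rfl))
        (fun y => by simpa [eval_mul] using (hu' s j y).mul_const (ψ.derivative.eval y))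
      simpa [cellInt, eval_mul] using h
    have hfg : (fun τ => cellInt grid j (fun y => (w τ j).eval y * ψ.eval y))
        = fun τ => brk grid (avg grid (u τ)) ψ j
          - cellInt grid j (fun y => (u τ j).eval y * ψ.derivative.eval y) :=
      funext fun τ => scheme3 τ j ψ (hdu' j)
    exact (hfg ▸ hL).unique (h1.sub h2)
  -- the `s`-derivative polynomial of the integrand
  set G : Fin (N + 1) → Polynomial ℝ :=
    fun j => ρ' s j * (u s j) ^ 2 + 2 * (ρ s j * (u s j * u' s j)) with hG
  have hGdeg : ∀ j, (G j).natDegree ≤ 3 * k := by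
    intro j
    have h1 : (ρ' s j * (u s j) ^ 2).natDegree ≤ 3 * k := by
      have ha := natDegree_mul_le (p := ρ' s j) (q := (u s j) ^ 2)
      have hb : ((u s j) ^ 2).natDegree ≤ 2 * (u s j).natDegree := natDegree_pow_le
      have hc := hdρ' j
      have hd := (hdeg s j).2.2.1
      omega
    have h2 : ((2 : ℝ[X]) * (ρ s j * (u s j * u' s j))).natDegree ≤ 3 * k := by
      have ha := natDegree_mul_le (p := (2 : ℝ[X])) (q := ρ s j * (u s j * u' s j))
      have hb := natDegree_mul_le (p := ρ s j) (q := u s j * u' s j)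
      have hc := natDegree_mul_le (p := u s j) (q := u' s j)
      have h2n : (2 : ℝ[X]).natDegree = 0 := by simp
      have hd := (hdeg s j).1
      have he := (hdeg s j).2.2.1
      have hf := hdu' j
      omega
    exact (natDegree_add_le _ _).trans (max_le h1 h2)
  have hptw : ∀ j y, HasDerivAt (fun τ => (ρ τ j * (u τ j) ^ 2).eval y) ((G j).eval y) s := by
    intro j y
    have h := (hρ' s j y).mul ((hu' s j y).pow 2)
    simp only [eval_mul, eval_pow]
    refine h.congr_deriv ?_
    simp [hG]
    ring
  have hder : HasDerivAt
      (fun τ => ∑ j, cellInt grid j (fun y => (ρ τ j).eval y * ((u τ j).eval y) ^ 2))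
      (∑ j, cellInt grid j (fun y => (G j).eval y)) s := by
    refine HasDerivAt.fun_sum fun j _ => ?_
    have hFdeg : ∀ τ, (ρ τ j * (u τ j) ^ 2).natDegree ≤ 3 * k := by
      intro τ
      have ha := natDegree_mul_le (p := ρ τ j) (q := (u τ j) ^ 2)
      have hb : ((u τ j) ^ 2).natDegree ≤ 2 * (u τ j).natDegree := natDegree_pow_le
      have hc := (hdeg τ j).1
      have hd := (hdeg τ j).2.2.1
      omega
    have h := CDaux.hasDerivAt_integral (a := lep grid j) (b := rep grid j)
      (D := 3 * k) (F := fun τ => ρ τ j * (u τ j) ^ 2) (G := G j)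
      hFdeg (hGdeg j) (hptw j)
    simpa [cellInt, eval_mul, eval_pow] using h
  have hzero : ∑ j, cellInt grid j (fun y => (G j).eval y) = 0 := by
    have hsplit : ∀ j : Fin (N + 1), cellInt grid j (fun y => (G j).eval y)
        = cellInt grid j (fun y => (ρ' s j).eval y * ((u s j).eval y) ^ 2)
          + 2 * cellInt grid j
              (fun y => (ρ s j).eval y * (u s j).eval y * (u' s j).eval y) := by
      intro j
      simp only [cellInt]
      rw [← intervalIntegral.integral_const_mul, ← intervalIntegral.integral_add]
      · congr 1
        funext y
        simp [hG]
        ring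
      · exact ((ρ' s j).continuous.mul ((u s j).continuous.pow 2)).intervalIntegrable _ _
      · exact (continuous_const.mul (((ρ s j).continuous.mul
          (u s j).continuous).mul (u' s j).continuous)).intervalIntegrable _ _
    have hpart1 : ∀ j : Fin (N + 1),
        cellInt grid j (fun y => (ρ' s j).eval y * ((u s j).eval y) ^ 2)
        = -2 * (brk grid (avg grid (γ s)) (γ s j) j
            - cellInt grid j (fun y => (γ s j).eval y * (γ s j).derivative.eval y)) := by
      intro j
      have h4 := scheme4 s j (ρ' s j) (hdρ' j)
      have h1 := scheme1 s j (γ s j) (hdeg s j).2.2.2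
      have e1 : cellInt grid j (fun y => (ρ' s j).eval y * ((u s j).eval y) ^ 2)
          = 2 * cellInt grid j (fun y => ((u s j).eval y) ^ 2 / 2 * (ρ' s j).eval y) := by
        simp only [cellInt]
        rw [← intervalIntegral.integral_const_mul]
        congr 1
        funext y
        ring
      have e2 : cellInt grid j (fun y => (γ s j).eval y * (ρ' s j).eval y)
          = cellInt grid j (fun y => (ρ' s j).eval y * (γ s j).eval y) := by
        simp only [cellInt]
        congr 1
        funext y
        ring
      rw [e1, ← h4, e2]
      linarith [h1]
    have hpart2 : ∀ j : Fin (N + 1),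
        cellInt grid j (fun y => (ρ s j).eval y * (u s j).eval y * (u' s j).eval y)
        = brk grid (avg grid (u' s)) (u' s j) j
          - cellInt grid j (fun y => (u' s j).eval y * (u' s j).derivative.eval y) := by
      intro j
      rw [← scheme2 s j (u' s j) (hdu' j)]
      exact scheme3' j
    calc ∑ j, cellInt grid j (fun y => (G j).eval y)
        = ∑ j : Fin (N + 1), ((-2) * (brk grid (avg grid (γ s)) (γ s j) j
            - cellInt grid j (fun y => (γ s j).eval y * (γ s j).derivative.eval y))
          + 2 * (brk grid (avg grid (u' s)) (u' s j) j
            - cellInt grid j (fun y => (u' s j).eval y * (u' s j).derivative.eval y))) := by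
          refine Finset.sum_congr rfl fun j _ => ?_
          rw [hsplit j, hpart1 j, hpart2 j]
      _ = (-2) * ∑ j : Fin (N + 1), (brk grid (avg grid (γ s)) (γ s j) j
            - cellInt grid j (fun y => (γ s j).eval y * (γ s j).derivative.eval y))
          + 2 * ∑ j : Fin (N + 1), (brk grid (avg grid (u' s)) (u' s j) j
            - cellInt grid j (fun y => (u' s j).eval y * (u' s j).derivative.eval y)) := by
          rw [Finset.sum_add_distrib, Finset.mul_sum, Finset.mul_sum]
      _ = 0 := by rw [CDaux.tele grid (γ s), CDaux.tele grid (u' s)]; ring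
  exact hzero ▸ hder


end
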